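/- Let u = (2,−1) and w = (0,1) in ℤ². Then the rank-one symmetric matrices uuᵀ and wwᵀ are linearly independent over ℝ, but the symmetric integer matrix ½(uuᵀ − wwᵀ) lies in their ℚ-span and not in their ℤ-span; in particular, uuᵀ and wwᵀ span a non-primitive sublattice of the lattice of symmetric 2×2 integer matrices and cannot be completed to a ℤ-basis of it. (Hence the Friedman–Smith monodromy cone for n = 2 is simplicial but not basic.) -/

import Mathlib

/-- The lattice of symmetric `n × n` integer matrices, as a `ℤ`-submodule of all
`n × n` integer matrices. -/
def symMatrixLattice (n : ℕ) : Submodule ℤ (Matrix (Fin n) (Fin n) ℤ) where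
  carrier := {M | M.IsSymm}
  add_mem' := fun ha hb => Matrix.IsSymm.add ha hb
  zero_mem' := Matrix.isSymm_zero
  smul_mem' := fun c _ hM => Matrix.IsSymm.smul hM c

/-- `u = (2, −1) ∈ ℤ²`. -/
def u6 : Fin 2 → ℤ := ![2, -1]

/-- `w = (0, 1) ∈ ℤ²`. -/
def w6 : Fin 2 → ℤ := ![0, 1]

/-- The rank-one symmetric matrix `uuᵀ`. -/
def U6 : Matrix (Fin 2) (Fin 2) ℤ := Matrix.vecMulVec u6 u6

/-- The rank-one symmetric matrix `wwᵀ`. -/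
def W6 : Matrix (Fin 2) (Fin 2) ℤ := Matrix.vecMulVec w6 w6

/-- The symmetric integer matrix `½(uuᵀ − wwᵀ)`. -/
def M6 : Matrix (Fin 2) (Fin 2) ℤ := !![2, -1; -1, 0]

lemma U6_eq : U6 = !![4, -2; -2, 1] := by
  ext i j
  fin_cases i <;> fin_cases j <;>
    simp [U6, u6, Matrix.vecMulVec_apply]

lemma W6_eq : W6 = !![0, 0; 0, 1] := by
  ext i j
  fin_cases i <;> fin_cases j <;>
    simp [W6, w6, Matrix.vecMulVec_apply]

lemma two_smul_M6 : (2 : ℤ) • M6 = U6 - W6 := by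
  rw [U6_eq, W6_eq]
  ext i j
  fin_cases i <;> fin_cases j <;> simp [M6]

lemma M6_symm : M6.IsSymm := by
  ext i j
  fin_cases i <;> fin_cases j <;> simp [M6, Matrix.transpose_apply]

/-- Let `u = (2,−1)`, `w = (0,1)` in `ℤ²`.  The rank-one symmetric matrices `uuᵀ` and `wwᵀ`
are linearly independent over `ℝ`, but the symmetric integer matrix `½(uuᵀ − wwᵀ)` lies in
their `ℚ`-span and not in their `ℤ`-span; in particular `uuᵀ` and `wwᵀ` span a
non-primitive sublattice of the lattice of symmetric `2 × 2` integer matrices and cannot be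
completed to a `ℤ`-basis of it.  (Hence the Friedman–Smith monodromy cone for `n = 2` is
simplicial but not basic.) -/
theorem fs2_cone_simplicial_not_basic :
    LinearIndependent ℝ ![U6.map (Int.cast : ℤ → ℝ), W6.map (Int.cast : ℤ → ℝ)] ∧
    M6.IsSymm ∧
    (2 : ℤ) • M6 = U6 - W6 ∧
    M6.map (Int.cast : ℤ → ℚ) ∈
      Submodule.span ℚ {U6.map (Int.cast : ℤ → ℚ), W6.map (Int.cast : ℤ → ℚ)} ∧
    M6 ∉ Submodule.span ℤ {U6, W6} ∧
    ¬∃ (B : Module.Basis (Fin 3) ℤ (symMatrixLattice 2)) (i j : Fin 3),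
        i ≠ j ∧ (B i : Matrix (Fin 2) (Fin 2) ℤ) = U6 ∧
          (B j : Matrix (Fin 2) (Fin 2) ℤ) = W6 := by
  refine ⟨?_, M6_symm, two_smul_M6, ?_, ?_, ?_⟩
  · rw [LinearIndependent.pair_iff]
    intro s t h
    have h00 := congrFun (congrFun h 0) 0
    have h11 := congrFun (congrFun h 1) 1
    rw [U6_eq, W6_eq] at h00 h11
    simp [Matrix.map_apply, Matrix.add_apply, Matrix.smul_apply] at h00 h11
    constructor <;> linarith
  · rw [Submodule.mem_span_pair]
    refine ⟨1/2, -1/2, ?_⟩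
    rw [U6_eq, W6_eq]
    ext i j
    fin_cases i <;> fin_cases j <;>
      norm_num [M6, Matrix.map_apply, Matrix.add_apply, Matrix.smul_apply]
  · rw [Submodule.mem_span_pair]
    rintro ⟨c, d, h⟩
    have h00 := congrFun (congrFun h 0) 0
    rw [U6_eq, W6_eq] at h00
    simp [M6, Matrix.add_apply, Matrix.smul_apply] at h00
    omega
  · rintro ⟨B, i, j, hij, hi, hj⟩
    have hm : M6 ∈ symMatrixLattice 2 := M6_symm
    set m : symMatrixLattice 2 := ⟨M6, hm⟩ with hmdef
    have key : (2 : ℤ) • m = B i - B j := by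
      apply Subtype.ext
      push_cast [Submodule.coe_smul]
      rw [hi, hj]
      exact two_smul_M6
    have hrepr : B.repr ((2 : ℤ) • m) = Finsupp.single i 1 - Finsupp.single j 1 := by
      rw [key, map_sub, B.repr_self, B.repr_self]
    rw [map_smul] at hrepr
    have := DFunLike.congr_fun hrepr i
    simp [Finsupp.single_apply, hij, Ne.symm hij] at this
    omega
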